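/- Let $C_z, C_p, C_S > 0$ with $\sqrt{2C_pC_S} > 2\sqrt{C_z}$. Define the 1D front speed $v(R_1, R_2) = R_2 + \sqrt{C_z}\tanh(R_1/\sqrt{C_z})$ where $R_2 = R - R_1$, and suppose $R_2(R_1)$ is the nonnegative root of the relation in the 1D free boundary model. Then $v(R_1, R_2(R_1)) \to \sqrt{2C_pC_S} - \sqrt{C_z}$ as $R_1 \to \infty$, with error $O(e^{-2R_1/\sqrt{C_z}})$. -/

import Mathlib

open Filter

/-- Exponential convergence of the 1D front speed
`v(R₁) = R₂(R₁) + √C_z tanh(R₁/√C_z)` to the traveling-wave speed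
`√(2C_pC_S) − √C_z`, with error `O(e^{−2R₁/√C_z})`. -/
theorem stmt5 (Cz Cp CS : ℝ) (hz : 0 < Cz) (hp : 0 < Cp) (hs : 0 < CS)
    (h : Real.sqrt (2 * Cp * CS) > 2 * Real.sqrt Cz)
    (R2 : ℝ → ℝ)
    (hR2 : ∀ R1 : ℝ, 0 ≤ R1 → 0 ≤ R2 R1 ∧
      (R2 R1) ^ 2 + 2 * Real.sqrt Cz * (1 + Real.tanh (R1 / Real.sqrt Cz)) * R2 R1 +
        2 * Cz * (1 + Real.tanh (R1 / Real.sqrt Cz)) - 2 * Cp * CS = 0)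
    (v : ℝ → ℝ)
    (hv : ∀ R1, v R1 = R2 R1 + Real.sqrt Cz * Real.tanh (R1 / Real.sqrt Cz)) :
    Tendsto v atTop (nhds (Real.sqrt (2 * Cp * CS) - Real.sqrt Cz)) ∧
    (fun R1 => v R1 - (Real.sqrt (2 * Cp * CS) - Real.sqrt Cz)) =O[atTop]
      (fun R1 => Real.exp (-2 * R1 / Real.sqrt Cz)) := by
  have hA : (0:ℝ) < 2 * Cp * CS := by positivity
  set s := Real.sqrt Cz with hsdef
  set A := 2 * Cp * CS with hAdef
  have hs0 : 0 < s := Real.sqrt_pos.mpr hz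
  have hs2 : s ^ 2 = Cz := Real.sq_sqrt hz.le
  have hsA : 0 < Real.sqrt A := Real.sqrt_pos.mpr hA
  have hsA2 : Real.sqrt A ^ 2 = A := Real.sq_sqrt hA.le
  have hCzA : Cz < A := by nlinarith [Real.sqrt_nonneg Cz, Real.sqrt_nonneg A]
  clear_value s A
  -- main pointwise bound
  have hbound : ∀ R1 : ℝ, 0 ≤ R1 →
      |v R1 - (Real.sqrt A - s)| ≤ (4 * Cz / Real.sqrt A) * Real.exp (-2 * R1 / s) := by
    intro R1 hR1
    set x := R1 / s with hxdef
    set t := Real.tanh x with htdef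
    clear_value x t
    have hcosh : 1 ≤ Real.cosh x := Real.one_le_cosh x
    have hcosh0 : 0 < Real.cosh x := by linarith
    have hsech : 1 - t ^ 2 = 1 / Real.cosh x ^ 2 := by
      rw [htdef, Real.tanh_eq_sinh_div_cosh]
      have h1 := Real.cosh_sq_sub_sinh_sq x
      field_simp
      exact h1
    have hteq : Real.tanh (R1 / Real.sqrt Cz) = t := by
      rw [htdef, hxdef, hsdef]
    have ht2 : t ^ 2 < 1 := by
      have : 0 < 1 / Real.cosh x ^ 2 := by positivity
      linarith [hsech]
    have ht1 : -1 < t := by nlinarith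
    have ht1' : t < 1 := by nlinarith
    set D := A - Cz * (1 - t ^ 2) with hDdef
    clear_value D
    have hD0 : 0 < D := by rw [hDdef]; nlinarith
    obtain ⟨hn, hq⟩ := hR2 R1 hR1
    have hteq' : Real.tanh (R1 / s) = t := by rw [hsdef]; exact hteq
    rw [hteq'] at hq
    have hsq : (R2 R1 + s * (1 + t)) ^ 2 = D := by
      rw [hDdef]; linear_combination hq + (1 + t)^2 * hs2
    have hnn : 0 ≤ R2 R1 + s * (1 + t) := by
      have := mul_nonneg hs0.le (by linarith : (0:ℝ) ≤ 1 + t)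
      linarith
    have key : R2 R1 + s * (1 + t) = Real.sqrt D := by
      rw [← hsq, Real.sqrt_sq hnn]
    have hvR : v R1 = Real.sqrt D - s := by
      rw [hv R1, hteq']; linarith [key]
    have hsD2 : Real.sqrt D ^ 2 = D := Real.sq_sqrt hD0.le
    have hsD0 : 0 < Real.sqrt D := Real.sqrt_pos.mpr hD0
    have hDA : Real.sqrt D ≤ Real.sqrt A := Real.sqrt_le_sqrt
      (by rw [hDdef]; nlinarith [mul_nonneg hz.le (by linarith : (0:ℝ) ≤ 1 - t ^ 2)])
    -- |√D − √A| ≤ (A − D)/√A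
    have hdiff : Real.sqrt A - Real.sqrt D ≤ Cz * (1 - t ^ 2) / Real.sqrt A := by
      rw [le_div_iff₀ hsA]
      have h1 : D ≤ Real.sqrt D * Real.sqrt A := by
        calc D = Real.sqrt D * Real.sqrt D := (Real.mul_self_sqrt hD0.le).symm
          _ ≤ Real.sqrt D * Real.sqrt A := by
              exact mul_le_mul_of_nonneg_left hDA hsD0.le
      have h2 : Cz * (1 - t ^ 2) = A - D := by rw [hDdef]; ring
      have h3 : (Real.sqrt A - Real.sqrt D) * Real.sqrt A = A - Real.sqrt D * Real.sqrt A := by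
        linear_combination hsA2
      rw [h2, h3]; linarith
    have habs : |v R1 - (Real.sqrt A - s)| = Real.sqrt A - Real.sqrt D := by
      rw [hvR, abs_of_nonpos (by linarith)]; ring
    -- sech bound
    have hexp : Real.exp (-2 * R1 / s) = 1 / Real.exp x ^ 2 := by
      rw [hxdef]
      rw [show -2 * R1 / s = -(2 * (R1 / s)) by ring]
      rw [Real.exp_neg, show (2 : ℝ) * (R1 / s) = R1/s + R1/s by ring, Real.exp_add]
      ring
    have hcoshge : Real.exp x / 2 ≤ Real.cosh x := by
      rw [Real.cosh_eq]
      have := Real.exp_pos (-x)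
      linarith
    have hexp0 : 0 < Real.exp x := Real.exp_pos x
    have hsechb : 1 / Real.cosh x ^ 2 ≤ 4 * Real.exp (-2 * R1 / s) := by
      rw [hexp, show (4:ℝ) * (1 / Real.exp x ^ 2) = 4 / Real.exp x ^ 2 from by ring,
        div_le_div_iff₀ (by positivity) (by positivity)]
      have h4 : (Real.exp x / 2) ^ 2 ≤ Real.cosh x ^ 2 :=
        pow_le_pow_left₀ (by positivity) hcoshge 2
      linarith [h4]
    rw [habs]
    calc Real.sqrt A - Real.sqrt D ≤ Cz * (1 - t ^ 2) / Real.sqrt A := hdiff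
      _ ≤ 4 * Cz / Real.sqrt A * Real.exp (-2 * R1 / s) := by
          rw [show 4 * Cz / Real.sqrt A * Real.exp (-2 * R1 / s)
              = Cz * (4 * Real.exp (-2 * R1 / s)) / Real.sqrt A from by ring]
          gcongr
          rw [hsech]
          exact hsechb
  have hO : (fun R1 => v R1 - (Real.sqrt A - s)) =O[atTop]
      (fun R1 => Real.exp (-2 * R1 / s)) := by
    rw [Asymptotics.isBigO_iff]
    refine ⟨4 * Cz / Real.sqrt A, ?_⟩
    filter_upwards [eventually_ge_atTop (0:ℝ)] with R1 hR1
    simpa [Real.norm_eq_abs, abs_of_pos (Real.exp_pos (-2 * R1 / s))] using hbound R1 hR1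
  have hlin : Tendsto (fun R1 : ℝ => -2 * R1 / s) atTop atBot := by
    have : (fun R1 : ℝ => -2 * R1 / s) = fun R1 => R1 * (-2 / s) := by
      funext R1; ring
    rw [this]
    exact Tendsto.atTop_mul_const_of_neg (div_neg_of_neg_of_pos (by norm_num) hs0) tendsto_id
  have hexp0 : Tendsto (fun R1 : ℝ => Real.exp (-2 * R1 / s)) atTop (nhds 0) :=
    Real.tendsto_exp_atBot.comp hlin
  have h0 : Tendsto (fun R1 => v R1 - (Real.sqrt A - s)) atTop (nhds 0) :=
    hO.trans_tendsto hexp0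
  constructor
  · have := h0.add_const (Real.sqrt A - s)
    simpa using this
  · exact hO
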